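/- Let γ > 0, 0 < λ < 2, and consider one iteration u = prox_{γh}(s), v = prox_{γg}(s), s⁺ = s + λ(v − u). Then s⁺ = s − γλ∇φ_γ(s) and the sufficient-decrease inequality φ_γ(s⁺) ≤ φ_γ(s) − (λ(2 − λ)/(2γ))‖u − v‖² holds. -/

import Mathlib

open scoped InnerProductSpace
noncomputable section

/-- `ℝ^p` as a Euclidean space. -/
abbrev Euc (p : ℕ) := EuclideanSpace ℝ (Fin p)

variable {p : ℕ}

/-- `f : ℝ^p → ℝ ∪ {∞}` (modelled with `EReal` values never equal to `-∞`) is proper. -/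
def ProperFun (f : Euc p → EReal) : Prop :=
  (∀ x, f x ≠ ⊥) ∧ (∃ x, f x ≠ ⊤)

/-- Convexity for extended-real-valued functions. -/
def ConvexFun (f : Euc p → EReal) : Prop :=
  ∀ x y : Euc p, ∀ t : ℝ, 0 ≤ t → t ≤ 1 →
    f (t • x + (1 - t) • y) ≤ (t : EReal) * f x + ((1 - t : ℝ) : EReal) * f y

/-- The convex subdifferential `∂f(x)`. -/
def Subdiff (f : Euc p → EReal) (x : Euc p) : Set (Euc p) :=
  {v | ∀ z, f x + ((⟪v, z - x⟫_ℝ : ℝ) : EReal) ≤ f z}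

/-- `u` minimizes `w ↦ f(w) + (1/(2γ))‖w − x‖²`. -/
def ProxObjMin (f : Euc p → EReal) (γ : ℝ) (x u : Euc p) : Prop :=
  ∀ w, f u + ((1/(2*γ) * ‖u - x‖^2 : ℝ) : EReal) ≤ f w + ((1/(2*γ) * ‖w - x‖^2 : ℝ) : EReal)

/-- `u = prox_{γf}(x)`: `u` is the unique minimizer of `w ↦ f(w) + (1/(2γ))‖w − x‖²`. -/
def IsProxOf (f : Euc p → EReal) (γ : ℝ) (x u : Euc p) : Prop :=
  ProxObjMin f γ x u ∧ ∀ w, ProxObjMin f γ x w → w = u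

/-- The Moreau envelope `f^γ(x) = inf_w { f(w) + (1/(2γ))‖w − x‖² }`, as an extended real. -/
def moreau (f : Euc p → EReal) (γ : ℝ) (x : Euc p) : EReal :=
  ⨅ w : Euc p, f w + ((1/(2*γ) * ‖w - x‖^2 : ℝ) : EReal)

/-- The (real-valued) Moreau envelope. -/
def moreauR (f : Euc p → EReal) (γ : ℝ) (x : Euc p) : ℝ := (moreau f γ x).toReal

/-- The DC envelope `φ_γ = g^γ − h^γ`. -/
def dce (g h : Euc p → EReal) (γ : ℝ) (s : Euc p) : ℝ := moreauR g γ s - moreauR h γ s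

/-- The DC function `φ = g − h`, with the convention `∞ − ∞ = ∞`. -/
def dcVal (g h : Euc p → EReal) (x : Euc p) : EReal :=
  if g x = ⊤ then ⊤ else g x - h x

lemma proxmin_ne_top (f : Euc p → EReal) (hf : ProperFun f)
    {γ : ℝ} {s u : Euc p} (hu : ProxObjMin f γ s u) : f u ≠ ⊤ := by
  obtain ⟨x₀, hx₀⟩ := hf.2
  intro htop
  have h1 := hu x₀
  rw [htop, EReal.top_add_coe] at h1
  have h2 : f x₀ + ((1/(2*γ) * ‖x₀ - s‖^2 : ℝ) : EReal) ≠ ⊤ := by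
    lift f x₀ to ℝ using ⟨hx₀, hf.1 x₀⟩ with fx
    exact_mod_cast EReal.coe_ne_top _
  exact h2 (top_le_iff.mp h1)

lemma prox_subgrad (f : Euc p → EReal) (hf : ProperFun f) (hfc : ConvexFun f)
    {γ : ℝ} (hγ : 0 < γ) {s u : Euc p} (hu : ProxObjMin f γ s u)
    {fu : ℝ} (hfu : f u = (fu : EReal)) :
    ∀ w, ((fu + 1/γ * ⟪s - u, w - u⟫_ℝ : ℝ) : EReal) ≤ f w := by
  intro w
  rcases eq_or_ne (f w) ⊤ with hw | hw
  · rw [hw]; exact le_top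
  obtain ⟨fw, hfw⟩ : ∃ fw : ℝ, f w = (fw : EReal) :=
    ⟨(f w).toReal, (EReal.coe_toReal hw (hf.1 w)).symm⟩
  rw [hfw, EReal.coe_le_coe_iff]
  apply le_of_forall_pos_le_add
  intro ε hε
  set C : ℝ := 1/(2*γ) * ‖w - u‖^2 with hC
  have hC0 : 0 ≤ C := by positivity
  set t : ℝ := min 1 (ε/(C+1)) with ht
  have ht0 : 0 < t := lt_min one_pos (by positivity)
  have ht1 : t ≤ 1 := min_le_left _ _
  have htC : t * C ≤ ε := by
    have h1 : t ≤ ε/(C+1) := min_le_right _ _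
    have h2 : t * C ≤ (ε/(C+1)) * C := by nlinarith
    have h3 : (ε/(C+1)) * C ≤ ε := by
      rw [div_mul_eq_mul_div, div_le_iff₀ (by linarith)]; nlinarith
    linarith
  -- convexity
  have hconv := hfc w u t ht0.le ht1
  rw [hfu, hfw] at hconv
  have hconv' : f (t • w + (1 - t) • u) ≤ ((t * fw + (1-t) * fu : ℝ) : EReal) := by
    refine hconv.trans_eq ?_
    push_cast
    ring
  set wt : Euc p := t • w + (1 - t) • u with hwt
  have hwtne : f wt ≠ ⊤ := fun htop => by rw [htop] at hconv'; exact (EReal.coe_ne_top _) (top_le_iff.mp hconv')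
  obtain ⟨fwt, hfwt⟩ : ∃ x : ℝ, f wt = (x : EReal) :=
    ⟨(f wt).toReal, (EReal.coe_toReal hwtne (hf.1 wt)).symm⟩
  have hfwt_le : fwt ≤ t * fw + (1-t) * fu := by
    rw [hfwt] at hconv'; exact_mod_cast hconv'
  -- prox minimality at wt
  have hmin := hu wt
  rw [hfu, hfwt] at hmin
  have hmin' : fu + 1/(2*γ) * ‖u - s‖^2 ≤ fwt + 1/(2*γ) * ‖wt - s‖^2 := by
    exact_mod_cast hmin
  -- expand ‖wt - s‖²
  have hid : wt - s = (u - s) + t • (w - u) := by rw [hwt]; module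
  have hexp : ‖wt - s‖^2 = ‖u - s‖^2 + 2*t*⟪u - s, w - u⟫_ℝ + t^2 * ‖w - u‖^2 := by
    rw [hid, norm_add_sq_real, real_inner_smul_right, norm_smul]
    rw [Real.norm_eq_abs, abs_of_pos ht0]
    ring
  have hinner : ⟪u - s, w - u⟫_ℝ = -⟪s - u, w - u⟫_ℝ := by
    rw [show u - s = -(s - u) by abel, inner_neg_left]
  have hγ' : γ ≠ 0 := hγ.ne'
  have key : fu + 1/γ * ⟪s - u, w - u⟫_ℝ ≤ fw + t * C := by
    rw [hexp, hinner] at hmin'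
    have e1 : fu ≤ fwt + 1/(2*γ) * (2 * t * -⟪s - u, w - u⟫_ℝ) + 1/(2*γ) * (t^2 * ‖w - u‖^2) := by
      linarith [hmin']
    have e3 : t * (fu - fw + 2 * (1/(2*γ)) * ⟪s - u, w - u⟫_ℝ - t * C) ≤ t * 0 := by
      rw [hC]; have e1' := e1; ring_nf at e1' ⊢; nlinarith [e1', hfwt_le]
    have e4 : fu - fw + 2 * (1/(2*γ)) * ⟪s - u, w - u⟫_ℝ - t * C ≤ 0 := by
      have := (mul_le_mul_iff_right₀ ht0).mp e3
      linarith
    rw [show (1/γ : ℝ) = 2 * (1/(2*γ)) by field_simp]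
    linarith [e4]
  linarith

lemma key_id (m a δ : Euc p) :
    2*⟪m, a⟫_ℝ + ‖a - δ - m‖^2 = ‖m‖^2 + 2*⟪m, δ⟫_ℝ + ‖a - δ‖^2 := by
  rw [norm_sub_sq_real (a - δ) m, inner_sub_left, real_inner_comm a m, real_inner_comm δ m]
  ring

lemma moreau_sandwich (f : Euc p → EReal) (hf : ProperFun f) (hfc : ConvexFun f)
    {γ : ℝ} (hγ : 0 < γ) {s u : Euc p} (hu : ProxObjMin f γ s u) (y : Euc p) :
    moreauR f γ s + 1/γ * ⟪s - u, y - s⟫_ℝ ≤ moreauR f γ y ∧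
    moreauR f γ y ≤ moreauR f γ s + 1/γ * ⟪s - u, y - s⟫_ℝ + 1/(2*γ) * ‖y - s‖^2 := by
  have hγ' : γ ≠ 0 := hγ.ne'
  have hc0 : (0:ℝ) ≤ 1/(2*γ) := by positivity
  have hfu_ne : f u ≠ ⊤ := proxmin_ne_top f hf hu
  obtain ⟨fu, hfu⟩ : ∃ x : ℝ, f u = (x : EReal) :=
    ⟨(f u).toReal, (EReal.coe_toReal hfu_ne (hf.1 u)).symm⟩
  have hsub := prox_subgrad f hf hfc hγ hu hfu
  -- upper bound on moreau
  have upE : ∀ z, moreau f γ z ≤ ((fu + 1/(2*γ) * ‖u - z‖^2 : ℝ) : EReal) := by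
    intro z
    have h := iInf_le (fun w : Euc p => f w + ((1/(2*γ) * ‖w - z‖^2 : ℝ) : EReal)) u
    rw [hfu] at h
    exact h.trans_eq (by push_cast; ring)
  -- lower bound on moreau
  have lowE : ∀ z, ((fu + 1/(2*γ) * ‖u - s‖^2 + 1/γ * ⟪s - u, z - s⟫_ℝ : ℝ) : EReal) ≤ moreau f γ z := by
    intro z
    refine le_iInf fun w => ?_
    have h1 := hsub w
    have hreal : fu + 1/(2*γ) * ‖u - s‖^2 + 1/γ * ⟪s - u, z - s⟫_ℝ ≤
        (fu + 1/γ * ⟪s - u, w - u⟫_ℝ) + 1/(2*γ) * ‖w - z‖^2 := by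
      have hkey := key_id (s - u) (w - u) (z - s)
      have hwz : w - z = (w - u) - (z - s) - (s - u) := by module
      have hns : ‖u - s‖ = ‖s - u‖ := norm_sub_rev u s
      rw [hwz, hns, show (1/γ:ℝ) = 2*(1/(2*γ)) by field_simp]
      have hsq : (0:ℝ) ≤ ‖(w - u) - (z - s)‖^2 := sq_nonneg _
      nlinarith [mul_le_mul_of_nonneg_left
        (show ‖s-u‖^2 + 2*⟪s-u, z-s⟫_ℝ ≤ 2*⟪s-u, w-u⟫_ℝ + ‖(w-u)-(z-s)-(s-u)‖^2 by linarith)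
        hc0]
    calc ((fu + 1/(2*γ) * ‖u - s‖^2 + 1/γ * ⟪s - u, z - s⟫_ℝ : ℝ) : EReal)
        ≤ (((fu + 1/γ * ⟪s - u, w - u⟫_ℝ) + 1/(2*γ) * ‖w - z‖^2 : ℝ) : EReal) := by
          exact_mod_cast hreal
      _ = ((fu + 1/γ * ⟪s - u, w - u⟫_ℝ : ℝ) : EReal) + ((1/(2*γ) * ‖w - z‖^2 : ℝ) : EReal) := by
          push_cast; ring
      _ ≤ f w + ((1/(2*γ) * ‖w - z‖^2 : ℝ) : EReal) := add_le_add h1 le_rfl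
  -- finiteness and real bounds
  have hm_ne_top : ∀ z, moreau f γ z ≠ ⊤ := fun z =>
    ne_top_of_le_ne_top (EReal.coe_ne_top _) (upE z)
  have hm_ne_bot : ∀ z, moreau f γ z ≠ ⊥ := fun z =>
    ne_bot_of_le_ne_bot (EReal.coe_ne_bot _) (lowE z)
  have hup : ∀ z, moreauR f γ z ≤ fu + 1/(2*γ) * ‖u - z‖^2 := by
    intro z
    have := EReal.toReal_le_toReal (upE z) (hm_ne_bot z) (EReal.coe_ne_top _)
    simpa only [moreauR, EReal.toReal_coe] using this
  have hlow : ∀ z, fu + 1/(2*γ) * ‖u - s‖^2 + 1/γ * ⟪s - u, z - s⟫_ℝ ≤ moreauR f γ z := by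
    intro z
    have := EReal.toReal_le_toReal (lowE z) (EReal.coe_ne_bot _) (hm_ne_top z)
    simpa only [moreauR, EReal.toReal_coe] using this
  have hs_eq : moreauR f γ s = fu + 1/(2*γ) * ‖u - s‖^2 := by
    have h1 := hup s
    have h2 := hlow s
    simp only [sub_self, inner_zero_right, mul_zero, add_zero] at h2
    linarith
  constructor
  · rw [hs_eq]; exact hlow y
  · have h1 := hup y
    have hexp : ‖u - y‖^2 = ‖u - s‖^2 + 2*⟪s - u, y - s⟫_ℝ + ‖y - s‖^2 := by
      rw [show u - y = (u - s) - (y - s) by module, norm_sub_sq_real,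
        show u - s = -(s - u) by abel, inner_neg_left]
      ring
    rw [hs_eq, show (1/γ:ℝ) = 2*(1/(2*γ)) by field_simp]
    rw [hexp] at h1
    linarith

/-- one iteration `u = prox_{γh}(s)`, `v = prox_{γg}(s)`, `s⁺ = s + λ(v − u)`
satisfies `s⁺ = s − γλ∇φ_γ(s)` and `φ_γ(s⁺) ≤ φ_γ(s) − (λ(2 − λ)/(2γ))‖u − v‖²`. -/
theorem statement12
    (g h : Euc p → EReal)
    (hg_proper : ProperFun g) (hg_convex : ConvexFun g) (hg_lsc : LowerSemicontinuous g)
    (hh_proper : ProperFun h) (hh_convex : ConvexFun h) (hh_lsc : LowerSemicontinuous h)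
    (γ : ℝ) (hγ : 0 < γ) (lam : ℝ) (hlam0 : 0 < lam) (hlam2 : lam < 2)
    (s u v splus : Euc p)
    (hu : IsProxOf h γ s u) (hv : IsProxOf g γ s v)
    (hsplus : splus = s + lam • (v - u)) :
    splus = s - (γ * lam) • gradient (dce g h γ) s ∧
      dce g h γ splus ≤ dce g h γ s - lam * (2 - lam)/(2*γ) * ‖u - v‖^2 := by
  have hγ' : γ ≠ 0 := hγ.ne'
  have Hh := fun y => moreau_sandwich h hh_proper hh_convex hγ hu.1 y
  have Hg := fun y => moreau_sandwich g hg_proper hg_convex hγ hv.1 y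
  have hi : ∀ y : Euc p, ⟪s - v, y - s⟫_ℝ - ⟪s - u, y - s⟫_ℝ = ⟪u - v, y - s⟫_ℝ := by
    intro y; rw [← inner_sub_left]; congr 1; module
  have keyUp : ∀ y, dce g h γ y ≤ dce g h γ s + 1/γ * ⟪u - v, y - s⟫_ℝ + 1/(2*γ) * ‖y - s‖^2 := by
    intro y
    have h1 := (Hg y).2
    have h2 := (Hh y).1
    simp only [dce]
    rw [← hi y]
    ring_nf
    ring_nf at h1 h2
    linarith
  have keyLow : ∀ y, dce g h γ s + 1/γ * ⟪u - v, y - s⟫_ℝ - 1/(2*γ) * ‖y - s‖^2 ≤ dce g h γ y := by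
    intro y
    have h1 := (Hg y).1
    have h2 := (Hh y).2
    simp only [dce]
    rw [← hi y]
    ring_nf
    ring_nf at h1 h2
    linarith
  have hgrad : HasGradientAt (dce g h γ) ((1/γ) • (u - v)) s := by
    rw [hasGradientAt_iff_hasFDerivAt, hasFDerivAt_iff_isLittleO, Asymptotics.isLittleO_iff]
    intro c hc
    rw [Metric.eventually_nhds_iff]
    refine ⟨2*γ*c, by positivity, fun y hy => ?_⟩
    have hyd : ‖y - s‖ < 2*γ*c := by rwa [dist_eq_norm] at hy
    have hdual : (InnerProductSpace.toDual ℝ (Euc p) ((1/γ) • (u - v))) (y - s)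
        = 1/γ * ⟪u - v, y - s⟫_ℝ := by
      rw [InnerProductSpace.toDual_apply_apply, real_inner_smul_left]
    rw [hdual, Real.norm_eq_abs]
    have h1 := keyUp y
    have h2 := keyLow y
    rw [abs_le]
    have hn0 : (0:ℝ) ≤ ‖y - s‖ := norm_nonneg _
    have hq : 1/(2*γ) * ‖y - s‖^2 ≤ c * ‖y - s‖ := by
      rw [show (1/(2*γ) * ‖y - s‖^2 : ℝ) = ‖y - s‖^2/(2*γ) by ring,
        div_le_iff₀ (by positivity : (0:ℝ) < 2*γ)]
      nlinarith [mul_le_mul_of_nonneg_left hyd.le hn0]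
    exact ⟨by linarith, by linarith⟩
  have hgradeq : gradient (dce g h γ) s = (1/γ) • (u - v) := hgrad.gradient
  constructor
  · rw [hsplus, hgradeq, smul_smul, show γ * lam * (1/γ) = lam by field_simp]
    module
  · have hδ : splus - s = lam • (v - u) := by rw [hsplus]; abel
    have hi2 : ⟪u - v, splus - s⟫_ℝ = -(lam * ‖u - v‖^2) := by
      rw [hδ, real_inner_smul_right, show v - u = -(u - v) by abel, inner_neg_right,
        real_inner_self_eq_norm_sq]
      ring
    have hn2 : ‖splus - s‖^2 = lam^2 * ‖u - v‖^2 := by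
      rw [hδ, norm_smul, show v - u = -(u - v) by abel, norm_neg, Real.norm_eq_abs,
        abs_of_pos hlam0, mul_pow]
    have hk := keyUp splus
    rw [hi2, hn2] at hk
    have hcoef : dce g h γ s + 1/γ * -(lam * ‖u - v‖^2) + 1/(2*γ) * (lam^2 * ‖u - v‖^2)
        = dce g h γ s - lam * (2 - lam)/(2*γ) * ‖u - v‖^2 := by
      field_simp
      ring
    linarith [hk.trans_eq hcoef]
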